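/- In the Connes–Kreimer Hopf algebra of rooted trees, the coproduct Δ defined by Δ𝟏 = 𝟏⊗𝟏 and Δ[h₁⋯h_n]_r = [h₁⋯h_n]_r ⊗ 𝟏 + (id ⊗ [·]_r)(Δh₁ ⋯ Δh_n) is coassociative: (Δ ⊗ id)∘Δ = (id ⊗ Δ)∘Δ. -/

import Mathlib

open TensorProduct

set_option maxHeartbeats 1000000
set_option synthInstance.maxHeartbeats 400000

/-- Rooted trees decorated by natural numbers: a node together with its list of
subtrees (the forest grafted onto the root). -/
inductive RTree : Type
  | node : ℕ → List RTree → RTree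

/-- The Connes–Kreimer algebra: the free (monoid) algebra whose monomials are
forests, i.e. words of rooted trees. -/
noncomputable abbrev CKAlg : Type := MonoidAlgebra ℚ (FreeMonoid RTree)

/-- A rooted tree, viewed as an element of the Connes–Kreimer algebra. -/
noncomputable def treeElem (t : RTree) : CKAlg :=
  MonoidAlgebra.of ℚ (FreeMonoid RTree) (FreeMonoid.of t)

/-- The grafting operator `[·]_r` : the linear map sending a forest (monomial) to the
tree obtained by attaching a new root decorated by `r`. -/
noncomputable def graft (r : ℕ) : CKAlg →ₗ[ℚ] CKAlg :=
  MonoidAlgebra.mapDomainLinearMap ℚ ℚ fun f : FreeMonoid RTree =>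
    FreeMonoid.of (RTree.node r f.toList)

lemma single_eq_prod (l : List RTree) :
    MonoidAlgebra.single (FreeMonoid.ofList l) (1:ℚ) = (l.map treeElem).prod := by
  induction l with
  | nil => rfl
  | cons h t ih =>
      rw [FreeMonoid.ofList_cons, List.map_cons, List.prod_cons, ← ih]
      show _ = MonoidAlgebra.single (FreeMonoid.of h) (1:ℚ) * _
      rw [MonoidAlgebra.single_mul_single, one_mul]

lemma graft_single (r : ℕ) (f : FreeMonoid RTree) :
    graft r (MonoidAlgebra.single f (1:ℚ)) = treeElem (RTree.node r f.toList) := by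
  rw [graft, MonoidAlgebra.mapDomainLinearMap_single]; rfl

lemma delta_single (Δ : CKAlg →ₐ[ℚ] TensorProduct ℚ CKAlg CKAlg) (f : FreeMonoid RTree) :
    Δ (MonoidAlgebra.single f (1:ℚ))
      = (f.toList.map fun h => Δ (treeElem h)).prod := by
  have h0 : FreeMonoid.ofList f.toList = f := rfl
  rw [← h0, single_eq_prod, map_list_prod, List.map_map]
  rfl

/-- the map `a ↦ a ⊗ 1` -/
noncomputable def rho : CKAlg →ₗ[ℚ] TensorProduct ℚ CKAlg CKAlg :=
  (TensorProduct.mk ℚ CKAlg CKAlg).flip 1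

@[simp] lemma rho_apply (a : CKAlg) : rho a = a ⊗ₜ[ℚ] 1 := rfl

/-- the key recursion as an identity of linear maps -/
lemma star (Δ : CKAlg →ₐ[ℚ] TensorProduct ℚ CKAlg CKAlg)
    (hΔ : ∀ (r : ℕ) (f : List RTree),
      Δ (treeElem (RTree.node r f))
        = treeElem (RTree.node r f) ⊗ₜ[ℚ] (1 : CKAlg)
          + TensorProduct.map LinearMap.id (graft r)
              ((f.map fun h => Δ (treeElem h)).prod))
    (r : ℕ) (x : CKAlg) :
    Δ (graft r x)
      = rho (graft r x)
        + TensorProduct.map LinearMap.id (graft r) (Δ x) := by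
  have : Δ.toLinearMap.comp (graft r)
      = rho.comp (graft r)
        + (TensorProduct.map LinearMap.id (graft r)).comp Δ.toLinearMap := by
    refine MonoidAlgebra.lhom_ext' fun f => LinearMap.ext_ring ?_
    simp only [LinearMap.comp_apply, MonoidAlgebra.lsingle_apply, LinearMap.add_apply,
      AlgHom.toLinearMap_apply]
    show Δ (graft r (MonoidAlgebra.single f 1))
        = rho (graft r (MonoidAlgebra.single f 1))
          + TensorProduct.map LinearMap.id (graft r) (Δ (MonoidAlgebra.single f 1))
    rw [graft_single, delta_single, hΔ r f.toList, rho_apply]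
  exact DFunLike.congr_fun this x

noncomputable def Lhom (Δ : CKAlg →ₐ[ℚ] TensorProduct ℚ CKAlg CKAlg) :
    CKAlg →ₐ[ℚ] TensorProduct ℚ CKAlg (TensorProduct ℚ CKAlg CKAlg) :=
  ((Algebra.TensorProduct.assoc ℚ ℚ ℚ CKAlg CKAlg CKAlg).toAlgHom.comp
    (Algebra.TensorProduct.map Δ (AlgHom.id ℚ CKAlg))).comp Δ

noncomputable def Rhom (Δ : CKAlg →ₐ[ℚ] TensorProduct ℚ CKAlg CKAlg) :
    CKAlg →ₐ[ℚ] TensorProduct ℚ CKAlg (TensorProduct ℚ CKAlg CKAlg) :=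
  (Algebra.TensorProduct.map (AlgHom.id ℚ CKAlg) Δ).comp Δ

instance : MonoidHomClass (CKAlg →ₐ[ℚ] CKAlg ⊗[ℚ] (CKAlg ⊗[ℚ] CKAlg)) CKAlg
    (CKAlg ⊗[ℚ] (CKAlg ⊗[ℚ] CKAlg)) :=
  AlgHomClass.toRingHomClass.toMonoidHomClass

lemma Lhom_apply (Δ : CKAlg →ₐ[ℚ] TensorProduct ℚ CKAlg CKAlg) (x : CKAlg) :
    Lhom Δ x = (TensorProduct.assoc ℚ CKAlg CKAlg CKAlg)
      ((TensorProduct.map Δ.toLinearMap LinearMap.id) (Δ x)) := by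
  simp only [Lhom, AlgHom.comp_apply]
  generalize Δ x = z
  induction z using TensorProduct.induction_on with
  | zero => simp
  | tmul a b =>
      simp only [Algebra.TensorProduct.map_tmul, AlgHom.coe_id, id_eq,
        TensorProduct.map_tmul, LinearMap.id_coe, AlgHom.toLinearMap_apply]
      generalize Δ a = u
      induction u using TensorProduct.induction_on with
      | zero => simp
      | tmul c d => simp [Algebra.TensorProduct.assoc_tmul, TensorProduct.assoc_tmul]
      | add u v hu hv => simp only [TensorProduct.add_tmul, map_add, hu, hv]
  | add u v hu hv => simp only [map_add, hu, hv]

lemma Rhom_apply (Δ : CKAlg →ₐ[ℚ] TensorProduct ℚ CKAlg CKAlg) (x : CKAlg) :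
    Rhom Δ x = (TensorProduct.map LinearMap.id Δ.toLinearMap) (Δ x) := by
  simp only [Rhom, AlgHom.comp_apply]
  generalize Δ x = z
  induction z using TensorProduct.induction_on with
  | zero => simp
  | tmul a b => simp
  | add u v hu hv => simp only [map_add, hu, hv]

lemma assoc_map_aux (F : CKAlg →ₗ[ℚ] TensorProduct ℚ CKAlg CKAlg) (g : CKAlg →ₗ[ℚ] CKAlg)
    (z : TensorProduct ℚ CKAlg CKAlg) :
    (TensorProduct.assoc ℚ CKAlg CKAlg CKAlg) (TensorProduct.map F g z)
      = TensorProduct.map LinearMap.id (TensorProduct.map LinearMap.id g)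
          ((TensorProduct.assoc ℚ CKAlg CKAlg CKAlg) (TensorProduct.map F LinearMap.id z)) := by
  induction z using TensorProduct.induction_on with
  | zero => simp
  | tmul a b =>
      simp only [TensorProduct.map_tmul, LinearMap.id_coe, id_eq]
      induction F a using TensorProduct.induction_on with
      | zero => simp
      | tmul c d => simp
      | add u v hu hv => simp only [TensorProduct.add_tmul, map_add, hu, hv]
  | add u v hu hv => simp only [map_add, hu, hv]

lemma assoc_tmul_one (z : TensorProduct ℚ CKAlg CKAlg) :
    (TensorProduct.assoc ℚ CKAlg CKAlg CKAlg) (z ⊗ₜ[ℚ] (1 : CKAlg))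
      = TensorProduct.map LinearMap.id rho z := by
  induction z using TensorProduct.induction_on with
  | zero => simp
  | tmul a b => simp
  | add u v hu hv => simp only [TensorProduct.add_tmul, map_add, hu, hv]

lemma sizeOf_mem_lt {h : RTree} {l : List RTree} (hm : h ∈ l) : sizeOf h < sizeOf l := by
  induction hm with
  | head => simp; omega
  | tail _ _ ih => simp; omega

lemma key (Δ : CKAlg →ₐ[ℚ] TensorProduct ℚ CKAlg CKAlg)
    (hΔ : ∀ (r : ℕ) (f : List RTree),
      Δ (treeElem (RTree.node r f))
        = treeElem (RTree.node r f) ⊗ₜ[ℚ] (1 : CKAlg)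
          + TensorProduct.map LinearMap.id (graft r)
              ((f.map fun h => Δ (treeElem h)).prod)) :
    ∀ t : RTree, Lhom Δ (treeElem t) = Rhom Δ (treeElem t) := by
  suffices H : ∀ n : ℕ, ∀ t : RTree, sizeOf t < n → Lhom Δ (treeElem t) = Rhom Δ (treeElem t) by
    exact fun t => H (sizeOf t + 1) t (Nat.lt_succ_self _)
  intro n
  induction n with
  | zero => exact fun t ht => absurd ht (by omega)
  | succ n ih =>
      rintro ⟨r, f⟩ ht
      have ihf : ∀ h ∈ f, Lhom Δ (treeElem h) = Rhom Δ (treeElem h) := by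
        intro h hm
        refine ih h ?_
        have := sizeOf_mem_lt hm
        simp at ht
        omega
      set x : CKAlg := (f.map treeElem).prod with hxdef
      have hx : Lhom Δ x = Rhom Δ x := by
        rw [hxdef, map_list_prod, map_list_prod, List.map_map, List.map_map]
        congr 1
        exact List.map_congr_left fun h hm => ihf h hm
      have hP : Δ x = (f.map fun h => Δ (treeElem h)).prod := by
        rw [hxdef, map_list_prod, List.map_map]
        rfl
      have hT : Δ (treeElem (RTree.node r f))
          = treeElem (RTree.node r f) ⊗ₜ[ℚ] (1 : CKAlg)
            + TensorProduct.map LinearMap.id (graft r) (Δ x) := by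
        rw [hΔ r f, ← hP]
      have e1 : TensorProduct.map Δ.toLinearMap LinearMap.id
            (TensorProduct.map LinearMap.id (graft r) (Δ x))
          = TensorProduct.map Δ.toLinearMap (graft r) (Δ x) := by
        rw [← LinearMap.comp_apply, ← TensorProduct.map_comp, LinearMap.comp_id,
          LinearMap.id_comp]
      -- expand both sides
      rw [Lhom_apply, Rhom_apply, hT]
      rw [map_add, map_add, map_add]
      -- first summands
      have lhs1 : (TensorProduct.assoc ℚ CKAlg CKAlg CKAlg)
            (TensorProduct.map Δ.toLinearMap LinearMap.id
              (treeElem (RTree.node r f) ⊗ₜ[ℚ] (1:CKAlg)))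
          = treeElem (RTree.node r f) ⊗ₜ[ℚ] ((1:CKAlg) ⊗ₜ[ℚ] (1:CKAlg))
            + TensorProduct.map LinearMap.id (rho.comp (graft r)) (Δ x) := by
        simp only [TensorProduct.map_tmul, LinearMap.id_coe, id_eq,
          AlgHom.toLinearMap_apply]
        rw [hT, assoc_tmul_one, map_add]
        simp only [TensorProduct.map_tmul, LinearMap.id_coe, id_eq, rho_apply]
        rw [← LinearMap.comp_apply, ← TensorProduct.map_comp, LinearMap.id_comp]
      have rhs1 : TensorProduct.map LinearMap.id Δ.toLinearMap
            (treeElem (RTree.node r f) ⊗ₜ[ℚ] (1:CKAlg))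
          = treeElem (RTree.node r f) ⊗ₜ[ℚ] ((1:CKAlg) ⊗ₜ[ℚ] (1:CKAlg)) := by
        simp only [TensorProduct.map_tmul, LinearMap.id_coe, id_eq,
          AlgHom.toLinearMap_apply, map_one, Algebra.TensorProduct.one_def]
      -- second summands
      have lhs2 : (TensorProduct.assoc ℚ CKAlg CKAlg CKAlg)
            (TensorProduct.map Δ.toLinearMap LinearMap.id
              (TensorProduct.map LinearMap.id (graft r) (Δ x)))
          = TensorProduct.map LinearMap.id (TensorProduct.map LinearMap.id (graft r))
              (TensorProduct.map LinearMap.id Δ.toLinearMap (Δ x)) := by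
        rw [e1, assoc_map_aux, ← Lhom_apply, hx, Rhom_apply]
      have rhs2 : TensorProduct.map LinearMap.id Δ.toLinearMap
            (TensorProduct.map LinearMap.id (graft r) (Δ x))
          = TensorProduct.map LinearMap.id (rho.comp (graft r)) (Δ x)
            + TensorProduct.map LinearMap.id (TensorProduct.map LinearMap.id (graft r))
                (TensorProduct.map LinearMap.id Δ.toLinearMap (Δ x)) := by
        rw [← LinearMap.comp_apply, ← TensorProduct.map_comp, LinearMap.id_comp]
        have hcomp : Δ.toLinearMap.comp (graft r)
            = rho.comp (graft r)
              + (TensorProduct.map LinearMap.id (graft r)).comp Δ.toLinearMap := by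
          refine LinearMap.ext fun y => ?_
          simpa using star Δ hΔ r y
        rw [hcomp]
        have hsplit : TensorProduct.map (LinearMap.id (R := ℚ) (M := CKAlg))
              (rho ∘ₗ graft r + (TensorProduct.map LinearMap.id (graft r)) ∘ₗ Δ.toLinearMap)
            = TensorProduct.map LinearMap.id (rho ∘ₗ graft r)
              + TensorProduct.map LinearMap.id
                  ((TensorProduct.map LinearMap.id (graft r)) ∘ₗ Δ.toLinearMap) := by
          apply TensorProduct.ext'
          intro a b
          simp [TensorProduct.tmul_add]
        rw [hsplit, LinearMap.add_apply]
        congr 1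
        have h2 := TensorProduct.map_comp (LinearMap.id (R := ℚ) (M := CKAlg))
          (TensorProduct.map LinearMap.id (graft r)) LinearMap.id Δ.toLinearMap
        rw [LinearMap.id_comp] at h2
        rw [h2, LinearMap.comp_apply]
      rw [lhs1, rhs1, lhs2, rhs2]
      abel


/-- the Connes–Kreimer coproduct `Δ`, i.e. the algebra morphism
determined by `Δ𝟏 = 𝟏 ⊗ 𝟏` (automatic) and the recursion
`Δ[h₁⋯h_n]_r = [h₁⋯h_n]_r ⊗ 𝟏 + (id ⊗ [·]_r)(Δh₁ ⋯ Δh_n)`, is coassociative: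
`(Δ ⊗ id) ∘ Δ = (id ⊗ Δ) ∘ Δ`. -/
theorem stmt9 (Δ : CKAlg →ₐ[ℚ] TensorProduct ℚ CKAlg CKAlg)
    (hΔ : ∀ (r : ℕ) (f : List RTree),
      Δ (treeElem (RTree.node r f))
        = treeElem (RTree.node r f) ⊗ₜ[ℚ] (1 : CKAlg)
          + TensorProduct.map LinearMap.id (graft r)
              ((f.map fun h => Δ (treeElem h)).prod)) :
    ∀ x : CKAlg,
      (TensorProduct.assoc ℚ CKAlg CKAlg CKAlg)
          ((TensorProduct.map Δ.toLinearMap LinearMap.id) (Δ x))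
        = (TensorProduct.map LinearMap.id Δ.toLinearMap) (Δ x) := by
  intro x
  rw [← Lhom_apply, ← Rhom_apply]
  induction x using MonoidAlgebra.induction_linear with
  | zero => simp
  | add u v hu hv => simp [map_add, hu, hv]
  | single f a =>
      show Lhom Δ (MonoidAlgebra.single f a) = Rhom Δ (MonoidAlgebra.single f a)
      have : (MonoidAlgebra.single f a : CKAlg) = a • MonoidAlgebra.single f 1 := by
        rw [MonoidAlgebra.smul_single, smul_eq_mul, mul_one]
      rw [this, map_smul, map_smul]
      congr 1
      have h0 : FreeMonoid.ofList f.toList = f := rfl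
      rw [← h0, single_eq_prod, map_list_prod, map_list_prod, List.map_map, List.map_map]
      congr 1
      exact List.map_congr_left fun h _ => key Δ hΔ h
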